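/- Let Λ be a measurable space partitioned into finitely many measurable sets Λ_1, …, Λ_K, let μ_init be a probability measure on Λ with μ_init(Λ_k) > 0 for each k, and let μ_k denote the conditional probability measure of μ_init on Λ_k (the restriction of μ_init to Λ_k normalized by μ_init(Λ_k)). For each k, let Q_k : Λ → D_k be a measurable map into a measurable space, let ν_k = (Q_k)_*μ_k, let P_obs,k be a probability measure on D_k absolutely continuous with respect to ν_k, and let R_k = dP_obs,k/dν_k. Let w_1, …, w_K be nonnegative real numbers with Σ_{k=1}^K w_k = 1. Then the updated measure μ_up defined by μ_up(A) = Σ_{k=1}^K w_k ∫_{A∩Λ_k} R_k(Q_k(λ)) dμ_k(λ) is a probability measure on Λ. -/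

import Mathlib

open MeasureTheory ProbabilityTheory
open scoped ENNReal NNReal

/-- The clustered observation-consistent update
`μ_up(A) = Σ_k w_k ∫_{A∩Λ_k} R_k(Q_k(λ)) dμ_k(λ)` is a probability measure. -/
theorem clustered_update_isProbabilityMeasure
    {Λ : Type*} [MeasurableSpace Λ] {K : ℕ}
    (Λs : Fin K → Set Λ) (hmeas : ∀ k, MeasurableSet (Λs k))
    (hdisj : Pairwise (Function.onFun Disjoint Λs))
    (hcover : (⋃ k, Λs k) = Set.univ)
    (μ_init : Measure Λ) [IsProbabilityMeasure μ_init]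
    (hpos : ∀ k, 0 < μ_init (Λs k))
    (D : Fin K → Type*) [∀ k, MeasurableSpace (D k)]
    (Q : ∀ k, Λ → D k) (hQ : ∀ k, Measurable (Q k))
    (P_obs : ∀ k, Measure (D k)) [∀ k, IsProbabilityMeasure (P_obs k)]
    (habs : ∀ k, P_obs k ≪ Measure.map (Q k) (μ_init[|Λs k]))
    (w : Fin K → ℝ≥0) (hw : ∑ k, w k = 1) :
    IsProbabilityMeasure
      (∑ k, w k •
        (((μ_init[|Λs k]).restrict (Λs k)).withDensity
          (fun l => (P_obs k).rnDeriv (Measure.map (Q k) (μ_init[|Λs k])) (Q k l)))) := by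

  constructor
  have hterm : ∀ k : Fin K,
      (((μ_init[|Λs k]).restrict (Λs k)).withDensity
        (fun l => (P_obs k).rnDeriv (Measure.map (Q k) (μ_init[|Λs k])) (Q k l)))
        Set.univ = 1 := by
    intro k
    have hprob : IsProbabilityMeasure (μ_init[|Λs k]) :=
      cond_isProbabilityMeasure (hpos k).ne'
    have hcompl : (μ_init[|Λs k]) (Λs k)ᶜ = 0 := by
      rw [ProbabilityTheory.cond_apply (hmeas k)]
      simp
    have hrestr : (μ_init[|Λs k]).restrict (Λs k) = μ_init[|Λs k] :=
      Measure.restrict_eq_self_of_ae_mem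
        (by rw [ae_iff]; exact hcompl)
    rw [hrestr, withDensity_apply _ MeasurableSet.univ, Measure.restrict_univ]
    rw [← lintegral_map ((P_obs k).measurable_rnDeriv _) (hQ k)]
    rw [Measure.lintegral_rnDeriv (habs k)]
    exact measure_univ
  simp only [Measure.coe_finset_sum, Finset.sum_apply, Measure.smul_apply, hterm,
    smul_eq_mul, mul_one]
  simp only [ENNReal.smul_def, smul_eq_mul, mul_one, ← ENNReal.coe_finset_sum, hw, ENNReal.coe_one]
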